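/- Let A, B, C, D ∈ ℝ² with no three collinear. Let h be a conic through A, B, C, D with a center O, let u ∈ ℝ² be nonzero (the direction of a diameter k of h through O), let v ∈ ℝ² be nonzero with B_h(u, v) = 0, let M = O + s·u for some s ∈ ℝ, and let ℓ = {M + t·v : t ∈ ℝ} be a line containing none of A, B, C, D. Suppose some conic G through A, B, C, D, given by a polynomial not proportional to that of h, meets ℓ in exactly two points P ≠ Q with M = (P + Q)/2. Then every conic through A, B, C, D meets ℓ either in the empty set, or exactly in {M}, or exactly in a pair of distinct points whose midpoint is M. -/

import Mathlib

/-- A conic (possibly degenerate) in the affine plane `ℝ × ℝ`, given by the six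
coefficients of a polynomial `a·x² + b·x·y + c·y² + d·x + e·y + g`. -/
structure Conic where
  a : ℝ
  b : ℝ
  c : ℝ
  d : ℝ
  e : ℝ
  g : ℝ

/-- Evaluation of the defining polynomial of a conic at a point of `ℝ × ℝ`. -/
def Conic.eval (f : Conic) (p : ℝ × ℝ) : ℝ :=
  f.a * p.1 ^ 2 + f.b * p.1 * p.2 + f.c * p.2 ^ 2 + f.d * p.1 + f.e * p.2 + f.g

/-- The defining polynomial is nonzero. -/
def Conic.Nonzero (f : Conic) : Prop :=
  ¬ (f.a = 0 ∧ f.b = 0 ∧ f.c = 0 ∧ f.d = 0 ∧ f.e = 0 ∧ f.g = 0)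

/-- The conic passes through the four points `A`, `B`, `C`, `D`. -/
def Conic.Through (f : Conic) (A B C D : ℝ × ℝ) : Prop :=
  f.eval A = 0 ∧ f.eval B = 0 ∧ f.eval C = 0 ∧ f.eval D = 0

/-- No three of the four points `A`, `B`, `C`, `D` are collinear. -/
def NoThreeCollinear (A B C D : ℝ × ℝ) : Prop :=
  ¬ Collinear ℝ ({A, B, C} : Set (ℝ × ℝ)) ∧ ¬ Collinear ℝ ({A, B, D} : Set (ℝ × ℝ)) ∧
  ¬ Collinear ℝ ({A, C, D} : Set (ℝ × ℝ)) ∧ ¬ Collinear ℝ ({B, C, D} : Set (ℝ × ℝ))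

/-- The line through `M` with direction `u`. -/
def parmLine (M u : ℝ × ℝ) : Set (ℝ × ℝ) :=
  {p | ∃ t : ℝ, p = M + t • u}

/-- The polynomial of `f` is proportional to that of `h`. -/
def Conic.PropTo (f h : Conic) : Prop :=
  ∃ k : ℝ, f.a = k * h.a ∧ f.b = k * h.b ∧ f.c = k * h.c ∧
    f.d = k * h.d ∧ f.e = k * h.e ∧ f.g = k * h.g

/-- The polar bilinear form of the quadratic part of `f`:
`B_f(u, w) = a·u₁·w₁ + (b/2)·(u₁·w₂ + u₂·w₁) + c·u₂·w₂`. -/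
noncomputable def Conic.polarForm (f : Conic) (u w : ℝ × ℝ) : ℝ :=
  f.a * u.1 * w.1 + (f.b / 2) * (u.1 * w.2 + u.2 * w.1) + f.c * u.2 * w.2

/-- `O` is a center of the conic `f`. -/
def Conic.IsCenter (f : Conic) (O : ℝ × ℝ) : Prop :=
  ∀ w : ℝ × ℝ, f.eval (O + w) = f.eval (O - w)

open scoped RealInnerProductSpace

section Aux

lemma vec6_four (x0 x1 x2 x3 x4 x5 : ℝ) : ![x0,x1,x2,x3,x4,x5] (4 : Fin 6) = x4 := rfl
lemma vec6_five (x0 x1 x2 x3 x4 x5 : ℝ) : ![x0,x1,x2,x3,x4,x5] (5 : Fin 6) = x5 := rfl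

lemma collinear_iff_det (p q r : ℝ × ℝ) :
    Collinear ℝ ({p, q, r} : Set (ℝ × ℝ)) ↔
      (q.1 - p.1) * (r.2 - p.2) - (q.2 - p.2) * (r.1 - p.1) = 0 := by
  rw [collinear_iff_exists_forall_eq_smul_vadd]
  constructor
  · rintro ⟨p₀, w, hw⟩
    obtain ⟨a, ha⟩ := hw p (by simp)
    obtain ⟨b, hb⟩ := hw q (by simp)
    obtain ⟨c, hc⟩ := hw r (by simp)
    have h1 : q.1 - p.1 = (b - a) * w.1 := by rw [ha, hb]; simp [Prod.smul_fst]; ring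
    have h2 : q.2 - p.2 = (b - a) * w.2 := by rw [ha, hb]; simp [Prod.smul_snd]; ring
    have h3 : r.1 - p.1 = (c - a) * w.1 := by rw [ha, hc]; simp [Prod.smul_fst]; ring
    have h4 : r.2 - p.2 = (c - a) * w.2 := by rw [ha, hc]; simp [Prod.smul_snd]; ring
    rw [h1, h2, h3, h4]; ring
  · intro hdet
    by_cases hq1 : q.1 - p.1 = 0
    · by_cases hq2 : q.2 - p.2 = 0
      · refine ⟨p, r - p, ?_⟩
        intro x hx
        rcases hx with hx | hx | hx
        · exact ⟨0, by simp [hx]⟩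
        · refine ⟨0, ?_⟩
          have : q = p := by
            apply Prod.ext <;> [skip; skip] <;> linarith [hq1, hq2]
          simp [hx, this]
        · exact ⟨1, by simpa using hx⟩
      · refine ⟨p, q - p, ?_⟩
        intro x hx
        have hr1 : r.1 - p.1 = 0 := by
          have h' : (q.2 - p.2) * (r.1 - p.1) = 0 := by
            linear_combination (r.2 - p.2) * hq1 - hdet
          rcases mul_eq_zero.1 h' with h'' | h''
          · exact absurd h'' hq2
          · exact h''
        rcases hx with hx | hx | hx
        · exact ⟨0, by simp [hx]⟩
        · exact ⟨1, by simp [hx]⟩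
        · refine ⟨(r.2 - p.2) / (q.2 - p.2), ?_⟩
          subst hx
          apply Prod.ext
          · simp only [vadd_eq_add, Prod.fst_add, Prod.smul_fst, Prod.fst_sub, smul_eq_mul]
            field_simp
            linarith [hr1]
          · simp only [vadd_eq_add, Prod.snd_add, Prod.smul_snd, Prod.snd_sub, smul_eq_mul]
            field_simp
            ring
    · refine ⟨p, q - p, ?_⟩
      intro x hx
      rcases hx with hx | hx | hx
      · exact ⟨0, by simp [hx]⟩
      · exact ⟨1, by simp [hx]⟩
      · refine ⟨(r.1 - p.1) / (q.1 - p.1), ?_⟩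
        subst hx
        apply Prod.ext
        · simp only [vadd_eq_add, Prod.fst_add, Prod.smul_fst, Prod.fst_sub, smul_eq_mul]
          field_simp
          ring
        · simp only [vadd_eq_add, Prod.snd_add, Prod.smul_snd, Prod.snd_sub, smul_eq_mul]
          field_simp
          linear_combination hdet

/-- Three points each satisfying a nontrivial affine relation are collinear. -/
lemma affine_collinear (α β γ : ℝ) (hab : ¬ (α = 0 ∧ β = 0)) (A B C : ℝ × ℝ)
    (hA : α * A.1 + β * A.2 + γ = 0) (hB : α * B.1 + β * B.2 + γ = 0)
    (hC : α * C.1 + β * C.2 + γ = 0) :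
    Collinear ℝ ({A, B, C} : Set (ℝ × ℝ)) := by
  rw [collinear_iff_det]
  rcases not_and_or.1 hab with hα | hβ
  · have key : α * ((B.1 - A.1) * (C.2 - A.2) - (B.2 - A.2) * (C.1 - A.1)) = 0 := by
      linear_combination (C.2 - A.2) * hB - (C.2 - A.2) * hA - (B.2 - A.2) * hC +
        (B.2 - A.2) * hA
    exact (mul_eq_zero.1 key).resolve_left hα
  · have key : β * ((B.1 - A.1) * (C.2 - A.2) - (B.2 - A.2) * (C.1 - A.1)) = 0 := by
      linear_combination -(C.1 - A.1) * hB + (C.1 - A.1) * hA + (B.1 - A.1) * hC -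
        (B.1 - A.1) * hA
    exact (mul_eq_zero.1 key).resolve_left hβ

end Aux

open scoped RealInnerProductSpace

section ConicAux

/-- The coefficient of `t` in `f.eval (M + t • v)`. -/
def Conic.lcoef (f : Conic) (M v : ℝ × ℝ) : ℝ :=
  2 * f.a * M.1 * v.1 + f.b * (M.1 * v.2 + M.2 * v.1) + 2 * f.c * M.2 * v.2 +
    f.d * v.1 + f.e * v.2

/-- The coefficient of `t^2` in `f.eval (M + t • v)`. -/
def Conic.qcoef (f : Conic) (v : ℝ × ℝ) : ℝ :=
  f.a * v.1 ^ 2 + f.b * v.1 * v.2 + f.c * v.2 ^ 2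

lemma Conic.eval_line (f : Conic) (M v : ℝ × ℝ) (t : ℝ) :
    f.eval (M + t • v) = f.qcoef v * t ^ 2 + f.lcoef M v * t + f.eval M := by
  simp only [Conic.eval, Conic.qcoef, Conic.lcoef, Prod.fst_add, Prod.snd_add,
    Prod.smul_fst, Prod.smul_snd, smul_eq_mul]
  ring

lemma Conic.eval_plane (f : Conic) (M v w : ℝ × ℝ) (t n : ℝ) :
    f.eval (M + t • v + n • w) = f.qcoef v * t ^ 2 +
      (2 * f.a * v.1 * w.1 + f.b * (v.1 * w.2 + v.2 * w.1) + 2 * f.c * v.2 * w.2) * (t * n) +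
      f.qcoef w * n ^ 2 + f.lcoef M v * t + f.lcoef M w * n + f.eval M := by
  simp only [Conic.eval, Conic.qcoef, Conic.lcoef, Prod.fst_add, Prod.snd_add,
    Prod.smul_fst, Prod.smul_snd, smul_eq_mul]
  ring

/-- If the restriction of a nonzero conic polynomial to the plane vanishes, all
coefficients are zero. -/
lemma Conic.eval_zero_all (f : Conic) (hz : ∀ p : ℝ × ℝ, f.eval p = 0) :
    f.a = 0 ∧ f.b = 0 ∧ f.c = 0 ∧ f.d = 0 ∧ f.e = 0 ∧ f.g = 0 := by
  have h00 := hz (0, 0)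
  have h10 := hz (1, 0)
  have hm0 := hz (-1, 0)
  have h01 := hz (0, 1)
  have h0m := hz (0, -1)
  have h11 := hz (1, 1)
  simp only [Conic.eval] at h00 h10 hm0 h01 h0m h11
  norm_num at h00 h10 hm0 h01 h0m h11
  refine ⟨by linarith, by linarith, by linarith, by linarith, by linarith, by linarith⟩


lemma lin_helper {b2 c2 e1 s2 tX nX X1 X2 M1 M2 v1 v2 w1 w2 : ℝ}
    (heq : b2 * tX + c2 * nX + e1 = 0)
    (ht : s2 * tX = (X1 - M1) * v1 + (X2 - M2) * v2)
    (hn : s2 * nX = (X1 - M1) * w1 + (X2 - M2) * w2) :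
    (b2 * v1 + c2 * w1) * X1 + (b2 * v2 + c2 * w2) * X2 +
      (e1 * s2 - b2 * (M1 * v1 + M2 * v2) - c2 * (M1 * w1 + M2 * w2)) = 0 := by
  linear_combination s2 * heq - b2 * ht - c2 * hn

/-- A line disjoint from `{A, B, C}` (with `A,B,C` not collinear, all on the conic)
cannot be entirely contained in the zero set of a nonzero conic polynomial. -/
lemma Conic.line_not_subset (f : Conic) (hf0 : f.Nonzero) {A B C M v : ℝ × ℝ}
    (hv : v ≠ 0) (hABC : ¬ Collinear ℝ ({A, B, C} : Set (ℝ × ℝ)))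
    (hfA : f.eval A = 0) (hfB : f.eval B = 0) (hfC : f.eval C = 0)
    (hAl : A ∉ parmLine M v) (hBl : B ∉ parmLine M v) (hCl : C ∉ parmLine M v) :
    ¬ ∀ t : ℝ, f.eval (M + t • v) = 0 := by
  intro hline
  have hv' : v.1 ≠ 0 ∨ v.2 ≠ 0 := by
    by_contra hcon
    push_neg at hcon
    exact hv (Prod.ext hcon.1 hcon.2)
  have hs2 : (0 : ℝ) < v.1 ^ 2 + v.2 ^ 2 := by
    rcases hv' with h' | h' <;> positivity
  set s2 : ℝ := v.1 ^ 2 + v.2 ^ 2 with hs2def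
  set w : ℝ × ℝ := (-v.2, v.1) with hw
  -- from the line being contained: the three coefficients of the restriction vanish
  have h0 := hline 0
  have h1 := hline 1
  have hm1 := hline (-1)
  rw [Conic.eval_line] at h0 h1 hm1
  norm_num at h0 h1 hm1
  have hq : f.qcoef v = 0 := by linarith
  have hl : f.lcoef M v = 0 := by linarith
  -- decompose each of A, B, C over the basis (v, w) based at M
  have hrep : ∀ X : ℝ × ℝ, X ∉ parmLine M v → f.eval X = 0 →
      ∃ tX nX : ℝ, nX ≠ 0 ∧
        (2 * f.a * v.1 * w.1 + f.b * (v.1 * w.2 + v.2 * w.1) + 2 * f.c * v.2 * w.2) * tX +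
          f.qcoef w * nX + f.lcoef M w = 0 ∧
        s2 * tX = (X.1 - M.1) * v.1 + (X.2 - M.2) * v.2 ∧
        s2 * nX = (X.1 - M.1) * w.1 + (X.2 - M.2) * w.2 := by
    intro X hXl hXz
    set tX : ℝ := ((X.1 - M.1) * v.1 + (X.2 - M.2) * v.2) / s2 with htX
    set nX : ℝ := ((X.1 - M.1) * w.1 + (X.2 - M.2) * w.2) / s2 with hnX
    have hXrep : X = M + tX • v + nX • w := by
      apply Prod.ext
      · simp only [Prod.fst_add, Prod.smul_fst, smul_eq_mul, htX, hnX, hw]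
        field_simp
        ring
      · simp only [Prod.snd_add, Prod.smul_snd, smul_eq_mul, htX, hnX, hw]
        field_simp
        ring
    have hnXne : nX ≠ 0 := by
      intro hn0
      apply hXl
      exact ⟨tX, by rw [hXrep, hn0]; simp⟩
    refine ⟨tX, nX, hnXne, ?_, ?_, ?_⟩
    · have hXz' : f.eval (M + tX • v + nX • w) = 0 := by rw [← hXrep]; exact hXz
      rw [Conic.eval_plane] at hXz'
      rw [hq, hl] at hXz'
      have hfac : nX * ((2 * f.a * v.1 * w.1 + f.b * (v.1 * w.2 + v.2 * w.1) +
          2 * f.c * v.2 * w.2) * tX + f.qcoef w * nX + f.lcoef M w) = 0 := by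
        linear_combination hXz' - h0
      rcases mul_eq_zero.1 hfac with h' | h'
      · exact absurd h' hnXne
      · exact h'
    · rw [htX]; field_simp; try ring
    · rw [hnX]; field_simp; try ring
  obtain ⟨tA, nA, hnA, heqA, htA1, hnA1⟩ := hrep A hAl hfA
  obtain ⟨tB, nB, hnB, heqB, htB1, hnB1⟩ := hrep B hBl hfB
  obtain ⟨tC, nC, hnC, heqC, htC1, hnC1⟩ := hrep C hCl hfC
  set b2 : ℝ := 2 * f.a * v.1 * w.1 + f.b * (v.1 * w.2 + v.2 * w.1) + 2 * f.c * v.2 * w.2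
    with hb2
  by_cases hbc : b2 = 0 ∧ f.qcoef w = 0
  · -- then also the w-linear coefficient vanishes, hence f vanishes identically
    have he1 : f.lcoef M w = 0 := by
      have := heqA
      rw [hbc.1, hbc.2] at this
      linarith [this]
    -- f vanishes at every point of the plane
    have hzero : ∀ p : ℝ × ℝ, f.eval p = 0 := by
      intro p
      set tp : ℝ := ((p.1 - M.1) * v.1 + (p.2 - M.2) * v.2) / s2 with htp
      set np : ℝ := ((p.1 - M.1) * w.1 + (p.2 - M.2) * w.2) / s2 with hnp
      have hprep : p = M + tp • v + np • w := by
        apply Prod.ext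
        · simp only [Prod.fst_add, Prod.smul_fst, smul_eq_mul, htp, hnp, hw]
          field_simp
          ring
        · simp only [Prod.snd_add, Prod.smul_snd, smul_eq_mul, htp, hnp, hw]
          field_simp
          ring
      rw [hprep, Conic.eval_plane, hq, hl, ← hb2, hbc.1, hbc.2, he1]
      have := h0
      linarith [h0]
    exact hf0 (f.eval_zero_all hzero)
  · -- otherwise A, B, C lie on a genuine line
    set c2 : ℝ := f.qcoef w with hc2
    have hab : ¬ (b2 * v.1 + c2 * w.1 = 0 ∧ b2 * v.2 + c2 * w.2 = 0) := by
      rintro ⟨h1', h2'⟩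
      apply hbc
      constructor
      · have : b2 * s2 = 0 := by
          simp only [hw] at h1' h2'
          linear_combination v.1 * h1' + v.2 * h2'
        exact (mul_eq_zero.1 this).resolve_right (ne_of_gt hs2)
      · have : c2 * s2 = 0 := by
          simp only [hw] at h1' h2'
          linear_combination v.1 * h2' - v.2 * h1'
        exact (mul_eq_zero.1 this).resolve_right (ne_of_gt hs2)
    exact hABC (affine_collinear _ _ _ hab A B C
      (lin_helper heqA htA1 hnA1) (lin_helper heqB htB1 hnB1) (lin_helper heqC htC1 hnC1))

end ConicAux

section Pencil

noncomputable def Conic.coords (f : Conic) : EuclideanSpace ℝ (Fin 6) :=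
  (WithLp.equiv 2 (Fin 6 → ℝ)).symm ![f.a, f.b, f.c, f.d, f.e, f.g]

noncomputable def monVec (p : ℝ × ℝ) : EuclideanSpace ℝ (Fin 6) :=
  (WithLp.equiv 2 (Fin 6 → ℝ)).symm ![p.1 ^ 2, p.1 * p.2, p.2 ^ 2, p.1, p.2, 1]

lemma inner_mon_coords (f : Conic) (p : ℝ × ℝ) : ⟪monVec p, f.coords⟫ = f.eval p := by
  simp [PiLp.inner_apply, Fin.sum_univ_six, monVec, Conic.coords, Conic.eval,
    WithLp.equiv_symm_apply, PiLp.toLp_apply, vec6_four, vec6_five]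
  ring

lemma coords_eq_zero_iff (f : Conic) : f.coords = 0 ↔
    (f.a = 0 ∧ f.b = 0 ∧ f.c = 0 ∧ f.d = 0 ∧ f.e = 0 ∧ f.g = 0) := by
  constructor
  · intro h0
    have h' : ∀ j : Fin 6, f.coords j = 0 := by
      intro j; rw [h0]; rfl
    refine ⟨h' 0, h' 1, h' 2, h' 3, ?_, ?_⟩
    · have := h' 4; simpa [Conic.coords, WithLp.equiv_symm_apply, PiLp.toLp_apply, vec6_four] using this
    · have := h' 5; simpa [Conic.coords, WithLp.equiv_symm_apply, PiLp.toLp_apply, vec6_five] using this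
  · rintro ⟨h1, h2, h3, h4, h5, h6⟩
    ext j
    fin_cases j <;>
      simp [Conic.coords, WithLp.equiv_symm_apply, PiLp.toLp_apply, h1, h2, h3, h4, h5, h6, vec6_four,
        vec6_five]

/-- Conic whose polynomial is the product of the line through `p`, `q` and the
line through `r` with normal vector `z - r`. -/
def twoLineConic (p q r z : ℝ × ℝ) : Conic where
  a := (q.2 - p.2) * (z.1 - r.1)
  b := (q.2 - p.2) * (z.2 - r.2) + (p.1 - q.1) * (z.1 - r.1)
  c := (p.1 - q.1) * (z.2 - r.2)
  d := (q.2 - p.2) * (-(r.1 * (z.1 - r.1) + r.2 * (z.2 - r.2))) +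
    (p.2 * q.1 - p.1 * q.2) * (z.1 - r.1)
  e := (p.1 - q.1) * (-(r.1 * (z.1 - r.1) + r.2 * (z.2 - r.2))) +
    (p.2 * q.1 - p.1 * q.2) * (z.2 - r.2)
  g := (p.2 * q.1 - p.1 * q.2) * (-(r.1 * (z.1 - r.1) + r.2 * (z.2 - r.2)))

lemma twoLineConic_eval (p q r z x : ℝ × ℝ) :
    (twoLineConic p q r z).eval x =
      (-((q.1 - p.1) * (x.2 - p.2) - (q.2 - p.2) * (x.1 - p.1))) *
        ((z.1 - r.1) * (x.1 - r.1) + (z.2 - r.2) * (x.2 - r.2)) := by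
  simp only [Conic.eval, twoLineConic]
  ring

lemma sum_sq_ne_zero {x y : ℝ × ℝ} (h : x ≠ y) :
    (x.1 - y.1) * (x.1 - y.1) + (x.2 - y.2) * (x.2 - y.2) ≠ 0 := by
  intro h0
  apply h
  have h1 : x.1 - y.1 = 0 ∧ x.2 - y.2 = 0 := by
    constructor <;> nlinarith [sq_nonneg (x.1 - y.1), sq_nonneg (x.2 - y.2)]
  exact Prod.ext (by linarith [h1.1]) (by linarith [h1.2])

lemma monIndep {A B C D : ℝ × ℝ} (hgen : NoThreeCollinear A B C D) :
    LinearIndependent ℝ ![monVec A, monVec B, monVec C, monVec D] := by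
  obtain ⟨hABC, hABD, hACD, hBCD⟩ := hgen
  -- various distinctness facts
  have hAD : A ≠ D := by
    rintro rfl
    exact hACD (by simpa [Set.insert_comm, Set.pair_comm] using collinear_pair ℝ A C)
  have hBD : B ≠ D := by
    rintro rfl
    exact hBCD (by simpa [Set.insert_comm, Set.pair_comm] using collinear_pair ℝ B C)
  have hCD : C ≠ D := by
    rintro rfl
    exact hBCD (by simpa [Set.insert_comm, Set.pair_comm] using collinear_pair ℝ B C)
  -- determinant facts
  have detBCA : ¬ ((C.1 - B.1) * (A.2 - B.2) - (C.2 - B.2) * (A.1 - B.1) = 0) := by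
    rw [← collinear_iff_det]
    intro hcol
    exact hABC (by
      have : ({B, C, A} : Set (ℝ × ℝ)) = {A, B, C} := by
        ext x; simp; tauto
      rwa [this] at hcol)
  have detACB : ¬ ((C.1 - A.1) * (B.2 - A.2) - (C.2 - A.2) * (B.1 - A.1) = 0) := by
    rw [← collinear_iff_det]
    intro hcol
    exact hABC (by
      have : ({A, C, B} : Set (ℝ × ℝ)) = {A, B, C} := by
        ext x; simp; tauto
      rwa [this] at hcol)
  have detABC : ¬ ((B.1 - A.1) * (C.2 - A.2) - (B.2 - A.2) * (C.1 - A.1) = 0) := by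
    rw [← collinear_iff_det]; exact hABC
  have detABD : ¬ ((B.1 - A.1) * (D.2 - A.2) - (B.2 - A.2) * (D.1 - A.1) = 0) := by
    rw [← collinear_iff_det]; exact hABD
  rw [Fintype.linearIndependent_iff]
  intro gc hg
  have key : ∀ f : Conic, gc 0 * f.eval A + gc 1 * f.eval B + gc 2 * f.eval C +
      gc 3 * f.eval D = 0 := by
    intro f
    have h' := congrArg (fun z => ⟪z, f.coords⟫) hg
    simp only [inner_zero_left] at h'
    rw [show (∑ i : Fin 4, gc i • ![monVec A, monVec B, monVec C, monVec D] i) =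
        gc 0 • monVec A + gc 1 • monVec B + gc 2 • monVec C + gc 3 • monVec D by
      rw [Fin.sum_univ_four]; simp] at h'
    simp only [inner_add_left, real_inner_smul_left, inner_mon_coords] at h'
    exact h'
  have killer : ∀ {gg x y : ℝ}, gg * (-x * y) = 0 → ¬ x = 0 → y ≠ 0 → gg = 0 := by
    intro gg x y hxy hx hy
    rcases mul_eq_zero.1 hxy with h' | h'
    · exact h'
    · rcases mul_eq_zero.1 h' with h' | h'
      · exact absurd (neg_eq_zero.1 h') hx
      · exact absurd h' hy
  have hg0 : gc 0 = 0 := by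
    have hk := key (twoLineConic B C D A)
    rw [twoLineConic_eval, twoLineConic_eval, twoLineConic_eval, twoLineConic_eval] at hk
    have hk2 : gc 0 * (-((C.1 - B.1) * (A.2 - B.2) - (C.2 - B.2) * (A.1 - B.1)) *
        ((A.1 - D.1) * (A.1 - D.1) + (A.2 - D.2) * (A.2 - D.2))) = 0 := by
      linear_combination hk
    exact killer hk2 detBCA (sum_sq_ne_zero hAD)
  have hg1 : gc 1 = 0 := by
    have hk := key (twoLineConic A C D B)
    rw [twoLineConic_eval, twoLineConic_eval, twoLineConic_eval, twoLineConic_eval] at hk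
    have hk2 : gc 1 * (-((C.1 - A.1) * (B.2 - A.2) - (C.2 - A.2) * (B.1 - A.1)) *
        ((B.1 - D.1) * (B.1 - D.1) + (B.2 - D.2) * (B.2 - D.2))) = 0 := by
      linear_combination hk
    exact killer hk2 detACB (sum_sq_ne_zero hBD)
  have hg2 : gc 2 = 0 := by
    have hk := key (twoLineConic A B D C)
    rw [twoLineConic_eval, twoLineConic_eval, twoLineConic_eval, twoLineConic_eval] at hk
    have hk2 : gc 2 * (-((B.1 - A.1) * (C.2 - A.2) - (B.2 - A.2) * (C.1 - A.1)) *
        ((C.1 - D.1) * (C.1 - D.1) + (C.2 - D.2) * (C.2 - D.2))) = 0 := by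
      linear_combination hk
    exact killer hk2 detABC (sum_sq_ne_zero hCD)
  have hg3 : gc 3 = 0 := by
    have hk := key (twoLineConic A B C D)
    rw [twoLineConic_eval, twoLineConic_eval, twoLineConic_eval, twoLineConic_eval] at hk
    have hk2 : gc 3 * (-((B.1 - A.1) * (D.2 - A.2) - (B.2 - A.2) * (D.1 - A.1)) *
        ((D.1 - C.1) * (D.1 - C.1) + (D.2 - C.2) * (D.2 - C.2))) = 0 := by
      linear_combination hk
    exact killer hk2 detABD (sum_sq_ne_zero (Ne.symm hCD))
  intro i
  fin_cases i
  · exact hg0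
  · exact hg1
  · exact hg2
  · exact hg3

lemma coords_apply0 (f : Conic) : f.coords 0 = f.a := rfl
lemma coords_apply1 (f : Conic) : f.coords 1 = f.b := rfl
lemma coords_apply2 (f : Conic) : f.coords 2 = f.c := rfl
lemma coords_apply3 (f : Conic) : f.coords 3 = f.d := rfl
lemma coords_apply4 (f : Conic) : f.coords 4 = f.e := rfl
lemma coords_apply5 (f : Conic) : f.coords 5 = f.g := rfl

lemma pencil {A B C D : ℝ × ℝ} (hgen : NoThreeCollinear A B C D)
    {h G f : Conic} (hh0 : h.Nonzero) (hh : h.Through A B C D)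
    (hG : G.Through A B C D) (hGh : ¬ G.PropTo h)
    (hf : f.Through A B C D) :
    ∃ x y : ℝ, f.coords = x • h.coords + y • G.coords := by
  set W : Submodule ℝ (EuclideanSpace ℝ (Fin 6)) :=
    Submodule.span ℝ (Set.range ![monVec A, monVec B, monVec C, monVec D]) with hW
  have hW4 : Module.finrank ℝ W = 4 := by
    rw [hW, finrank_span_eq_card (monIndep hgen)]
    simp
  have hperp : Module.finrank ℝ Wᗮ = 2 := by
    have h6 := W.finrank_add_finrank_orthogonal
    rw [finrank_euclideanSpace_fin] at h6
    omega
  have hmem : ∀ k : Conic, k.Through A B C D → k.coords ∈ Wᗮ := by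
    intro k hk
    rw [Submodule.mem_orthogonal]
    intro x hx
    rw [hW] at hx
    induction hx using Submodule.span_induction with
    | mem y hy =>
      obtain ⟨i, rfl⟩ := hy
      fin_cases i
      · exact (inner_mon_coords k A).trans hk.1
      · exact (inner_mon_coords k B).trans hk.2.1
      · exact (inner_mon_coords k C).trans hk.2.2.1
      · exact (inner_mon_coords k D).trans hk.2.2.2
    | zero => simp
    | add y z hy hz hy' hz' => rw [inner_add_left, hy', hz', add_zero]
    | smul c y hy hy' => rw [real_inner_smul_left, hy', mul_zero]
  have hHGind : LinearIndependent ℝ ![h.coords, G.coords] := by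
    rw [LinearIndependent.pair_iff]
    intro st tt hst
    have hcomp : ∀ j : Fin 6, st * (h.coords j) + tt * (G.coords j) = 0 := by
      intro j
      have h' : (st • h.coords + tt • G.coords) j = (0 : EuclideanSpace ℝ (Fin 6)) j := by
        rw [hst]
      simpa [PiLp.add_apply, PiLp.smul_apply, smul_eq_mul] using h'
    by_cases htt : tt = 0
    · subst htt
      refine ⟨?_, rfl⟩
      have hs : st • h.coords = 0 := by
        have := hst; simpa using this
      rcases smul_eq_zero.1 hs with h' | h'
      · exact h'
      · exact absurd ((coords_eq_zero_iff h).1 h') hh0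
    · exfalso
      apply hGh
      refine ⟨-st / tt, ?_, ?_, ?_, ?_, ?_, ?_⟩
      · have := hcomp 0; rw [coords_apply0, coords_apply0] at this; field_simp; linarith
      · have := hcomp 1; rw [coords_apply1, coords_apply1] at this; field_simp; linarith
      · have := hcomp 2; rw [coords_apply2, coords_apply2] at this; field_simp; linarith
      · have := hcomp 3; rw [coords_apply3, coords_apply3] at this; field_simp; linarith
      · have := hcomp 4; rw [coords_apply4, coords_apply4] at this; field_simp; linarith
      · have := hcomp 5; rw [coords_apply5, coords_apply5] at this; field_simp; linarith
  have hle : Submodule.span ℝ (Set.range ![h.coords, G.coords]) ≤ Wᗮ := by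
    rw [Submodule.span_le]
    rintro x ⟨i, rfl⟩
    fin_cases i
    · exact hmem h hh
    · exact hmem G hG
  have hrank2 : Module.finrank ℝ (Submodule.span ℝ (Set.range ![h.coords, G.coords])) = 2 := by
    rw [finrank_span_eq_card hHGind]
    simp
  have heq := Submodule.eq_of_le_of_finrank_eq hle (by rw [hrank2, hperp])
  have hfmem : f.coords ∈ Submodule.span ℝ (Set.range ![h.coords, G.coords]) := by
    rw [heq]; exact hmem f hf
  rw [Submodule.mem_span_range_iff_exists_fun] at hfmem
  obtain ⟨c, hc⟩ := hfmem
  refine ⟨c 0, c 1, ?_⟩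
  rw [← hc, Fin.sum_univ_two]
  simp

end Pencil

lemma midpoint_offset (M v : ℝ × ℝ) (t : ℝ) :
    M = midpoint ℝ (M + t • v) (M + (-t) • v) := by
  rw [eq_comm, midpoint_eq_iff']
  rw [Equiv.pointReflection_apply]
  apply Prod.ext
  · simp only [vadd_eq_add, vsub_eq_sub, Prod.fst_add, Prod.fst_sub, Prod.smul_fst, smul_eq_mul]
    ring
  · simp only [vadd_eq_add, vsub_eq_sub, Prod.snd_add, Prod.snd_sub, Prod.smul_snd, smul_eq_mul]
    ring

/-- **Volenec's butterfly theorem for conics.** Let `h` be a conic through the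
four base points with center `O`, let the line `ℓ` through `M = O + s·u` with
direction `v` be conjugate to the diameter of `h` through `O` with direction `u`
(i.e. `B_h(u, v) = 0`). If some other conic through the four base points meets
`ℓ` in exactly two points with midpoint `M`, then every conic through the four
base points meets `ℓ` either not at all, or exactly at `M`, or exactly in a pair
of distinct points whose midpoint is `M`. -/
theorem volenec_butterfly
    (A B C D : ℝ × ℝ) (hgen : NoThreeCollinear A B C D)
    (h : Conic) (hh0 : h.Nonzero) (hh : h.Through A B C D)
    (O : ℝ × ℝ) (hO : h.IsCenter O)
    (u : ℝ × ℝ) (hu : u ≠ 0) (v : ℝ × ℝ) (hv : v ≠ 0)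
    (hconj : h.polarForm u v = 0)
    (s : ℝ) (M : ℝ × ℝ) (hM : M = O + s • u)
    (hAl : A ∉ parmLine M v) (hBl : B ∉ parmLine M v)
    (hCl : C ∉ parmLine M v) (hDl : D ∉ parmLine M v)
    (G : Conic) (hG0 : G.Nonzero) (hG : G.Through A B C D)
    (hGh : ¬ G.PropTo h)
    (P Q : ℝ × ℝ) (hPQ : P ≠ Q)
    (hGl : {p ∈ parmLine M v | G.eval p = 0} = {P, Q})
    (hmid : M = midpoint ℝ P Q) :
    ∀ f : Conic, f.Nonzero → f.Through A B C D →
      {p ∈ parmLine M v | f.eval p = 0} = ∅ ∨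
      {p ∈ parmLine M v | f.eval p = 0} = {M} ∨
      ∃ X Y : ℝ × ℝ, X ≠ Y ∧ M = midpoint ℝ X Y ∧
        {p ∈ parmLine M v | f.eval p = 0} = {X, Y} := by
  intro f hf0 hf
  have hv' : v.1 ≠ 0 ∨ v.2 ≠ 0 := by
    by_contra hcon
    push_neg at hcon
    exact hv (Prod.ext hcon.1 hcon.2)
  -- Step 1: the conjugate-diameter line coefficient of h vanishes
  have hOv := hO v
  simp only [Conic.eval, Prod.fst_add, Prod.snd_add, Prod.fst_sub, Prod.snd_sub] at hOv
  have hconj' := hconj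
  simp only [Conic.polarForm] at hconj'
  have hβh : h.lcoef M v = 0 := by
    rw [hM]
    simp only [Conic.lcoef, Prod.fst_add, Prod.snd_add, Prod.smul_fst, Prod.smul_snd,
      smul_eq_mul]
    linear_combination hOv / 2 + 2 * s * hconj'
  -- Step 2: the line coefficient of G vanishes
  have hPmem : P ∈ {p ∈ parmLine M v | G.eval p = 0} := by
    rw [hGl]; exact Set.mem_insert _ _
  have hQmem : Q ∈ {p ∈ parmLine M v | G.eval p = 0} := by
    rw [hGl]; exact Set.mem_insert_of_mem _ rfl
  obtain ⟨⟨tP, hPe⟩, hPz⟩ := hPmem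
  obtain ⟨⟨tQ, hQe⟩, hQz⟩ := hQmem
  have hsum : M + M = P + Q := by
    rw [hmid]; exact midpoint_add_self _ _ _
  have htsum : tP + tQ = 0 := by
    have hc1 := congrArg Prod.fst hsum
    have hc2 := congrArg Prod.snd hsum
    rw [hPe, hQe] at hc1 hc2
    simp only [Prod.fst_add, Prod.snd_add, Prod.smul_fst, Prod.smul_snd, smul_eq_mul] at hc1 hc2
    have e1 : (tP + tQ) * v.1 = 0 := by linarith
    have e2 : (tP + tQ) * v.2 = 0 := by linarith
    rcases hv' with h' | h'
    · exact (mul_eq_zero.1 e1).resolve_right h'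
    · exact (mul_eq_zero.1 e2).resolve_right h'
  have htne : tP ≠ tQ := by
    intro heqt
    exact hPQ (by rw [hPe, hQe, heqt])
  have htP0 : tP ≠ 0 := by
    intro h0
    exact htne (by linarith)
  have htQ : tQ = -tP := by linarith
  rw [hPe, Conic.eval_line] at hPz
  rw [hQe, htQ, Conic.eval_line] at hQz
  have hβG : G.lcoef M v = 0 := by
    have h2 : G.lcoef M v * (2 * tP) = 0 := by linear_combination hPz - hQz
    rcases mul_eq_zero.1 h2 with h' | h'
    · exact h'
    · exact absurd (by linarith : tP = 0) htP0
  -- Step 3: f is a pencil combination of h and G, hence its line coefficient vanishes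
  obtain ⟨x, y, hxy⟩ := pencil hgen hh0 hh hG hGh hf
  have hcomp : ∀ j : Fin 6, f.coords j = x * h.coords j + y * G.coords j := by
    intro j
    have h' : f.coords j = (x • h.coords + y • G.coords) j := by rw [hxy]
    simpa [PiLp.add_apply, PiLp.smul_apply, smul_eq_mul] using h'
  have ha : f.a = x * h.a + y * G.a := by
    have := hcomp 0; rwa [coords_apply0, coords_apply0, coords_apply0] at this
  have hb : f.b = x * h.b + y * G.b := by
    have := hcomp 1; rwa [coords_apply1, coords_apply1, coords_apply1] at this
  have hcc : f.c = x * h.c + y * G.c := by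
    have := hcomp 2; rwa [coords_apply2, coords_apply2, coords_apply2] at this
  have hd : f.d = x * h.d + y * G.d := by
    have := hcomp 3; rwa [coords_apply3, coords_apply3, coords_apply3] at this
  have hee : f.e = x * h.e + y * G.e := by
    have := hcomp 4; rwa [coords_apply4, coords_apply4, coords_apply4] at this
  have hβf : f.lcoef M v = 0 := by
    simp only [Conic.lcoef] at hβh hβG ⊢
    rw [ha, hb, hcc, hd, hee]
    linear_combination x * hβh + y * hβG
  -- Step 4: case analysis on the restriction q(t) = qcoef·t² + eval M
  by_cases hγ : f.eval M = 0
  · by_cases hq : f.qcoef v = 0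
    · exact absurd (fun t => by rw [Conic.eval_line, hq, hβf, hγ]; ring)
        (f.line_not_subset hf0 hv hgen.1 hf.1 hf.2.1 hf.2.2.1 hAl hBl hCl)
    · right; left
      ext p
      simp only [Set.mem_setOf_eq, Set.mem_singleton_iff]
      constructor
      · rintro ⟨⟨t, rfl⟩, hz⟩
        rw [Conic.eval_line, hβf, hγ] at hz
        have ht2 : f.qcoef v * t ^ 2 = 0 := by linarith
        have ht : t = 0 := by
          have := (mul_eq_zero.1 ht2).resolve_left hq
          exact pow_eq_zero_iff (two_ne_zero) |>.1 this
        rw [ht]; simp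
      · rintro rfl
        exact ⟨⟨0, by simp⟩, hγ⟩
  · by_cases hq : f.qcoef v = 0
    · left
      rw [Set.eq_empty_iff_forall_notMem]
      rintro p ⟨⟨t, rfl⟩, hz⟩
      rw [Conic.eval_line, hq, hβf] at hz
      exact hγ (by linarith)
    · rcases lt_trichotomy (-(f.eval M) / f.qcoef v) 0 with hr | hr | hr
      · left
        rw [Set.eq_empty_iff_forall_notMem]
        rintro p ⟨⟨t, rfl⟩, hz⟩
        rw [Conic.eval_line, hβf] at hz
        have ht2 : t ^ 2 = -(f.eval M) / f.qcoef v := by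
          rw [eq_div_iff hq]
          linarith [hz]
        have := sq_nonneg t
        rw [sq] at this
        nlinarith [ht2, hr, sq_nonneg t]
      · exfalso
        rw [div_eq_zero_iff] at hr
        rcases hr with h' | h'
        · exact hγ (by linarith [neg_eq_zero.1 h'])
        · exact hq h'
      · right; right
        have ht0sq : Real.sqrt (-(f.eval M) / f.qcoef v) ^ 2 = -(f.eval M) / f.qcoef v :=
          Real.sq_sqrt hr.le
        have ht0pos : 0 < Real.sqrt (-(f.eval M) / f.qcoef v) := Real.sqrt_pos.2 hr
        set t0 : ℝ := Real.sqrt (-(f.eval M) / f.qcoef v) with ht0def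
        have hkey : f.qcoef v * t0 ^ 2 + f.eval M = 0 := by
          rw [ht0sq]
          field_simp
          ring
        refine ⟨M + t0 • v, M + (-t0) • v, ?_, midpoint_offset M v t0, ?_⟩
        · intro heq
          have h2 := add_left_cancel heq
          have h3 : (t0 - -t0) • v = 0 := by rw [sub_smul, h2, sub_self]
          rcases smul_eq_zero.1 h3 with h' | h'
          · have : (2 : ℝ) * t0 = 0 := by linarith [h']
            linarith [ht0pos]
          · exact hv h'
        · ext p
          simp only [Set.mem_setOf_eq, Set.mem_insert_iff, Set.mem_singleton_iff]
          constructor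
          · rintro ⟨⟨t, rfl⟩, hz⟩
            rw [Conic.eval_line, hβf] at hz
            have ht2 : t ^ 2 = t0 ^ 2 := by
              rw [ht0sq, eq_div_iff hq]
              linarith [hz]
            have hfac : (t - t0) * (t + t0) = 0 := by linear_combination ht2
            rcases mul_eq_zero.1 hfac with h' | h'
            · left
              have : t = t0 := by linarith
              rw [this]
            · right
              have : t = -t0 := by linarith
              rw [this]
          · rintro (rfl | rfl)
            · refine ⟨⟨t0, rfl⟩, ?_⟩
              rw [Conic.eval_line, hβf]
              linarith [hkey]
            · refine ⟨⟨-t0, rfl⟩, ?_⟩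
              rw [Conic.eval_line, hβf]
              have : (-t0) ^ 2 = t0 ^ 2 := by ring
              rw [this]
              linarith [hkey]
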